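/- Let S be a finite type, p a probability mass function on S, and let X₁, …, X_n (n ≥ 1) be i.i.d. S-valued random variables on a probability space (Ω, ℱ, ℙ) each with law p. Let p̂(s) := (1/n) · #{i ∈ {1,…,n} : X_i = s} be the empirical distribution. Then for every ε > 0, ℙ(∑_{s∈S} |p̂(s) − p(s)| ≥ ε) ≤ (2^{card S} − 2) · exp(−n ε² / 2). -/

import Mathlib

open Finset MeasureTheory ProbabilityTheory

lemma hoeff_key {q : ℝ} (hq0 : 0 ≤ q) (hq1 : q ≤ 1) {t : ℝ} (ht : 0 ≤ t) :
    1 - q + q * Real.exp t ≤ Real.exp (t * q + t ^ 2 / 8) := by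
  have hd : ∀ x : ℝ, 0 < 1 - q + q * Real.exp x := by
    intro x
    rcases eq_or_lt_of_le hq1 with h | h
    · simp [← h]; positivity
    · have : 0 ≤ q * Real.exp x := by positivity
      linarith
  set g : ℝ → ℝ := fun x => x * q + x ^ 2 / 8 - Real.log (1 - q + q * Real.exp x) with hg
  set g1 : ℝ → ℝ := fun x => q + x / 4 - q * Real.exp x / (1 - q + q * Real.exp x) with hg1
  have hder : ∀ x, HasDerivAt g (g1 x) x := by
    intro x
    have h1 : HasDerivAt (fun x : ℝ => 1 - q + q * Real.exp x) (q * Real.exp x) x := by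
      simpa using ((Real.hasDerivAt_exp x).const_mul q).const_add (1 - q)
    have h2 : HasDerivAt (fun x : ℝ => Real.log (1 - q + q * Real.exp x))
        (q * Real.exp x / (1 - q + q * Real.exp x)) x := h1.log (hd x).ne'
    have h3 : HasDerivAt (fun x : ℝ => x * q + x ^ 2 / 8) (q + x / 4) x := by
      have := ((hasDerivAt_id x).mul_const q).add (((hasDerivAt_pow 2 x)).div_const 8)
      exact this.congr_deriv (by ring)
    exact h3.sub h2
  have hder1 : ∀ x, HasDerivAt g1
      ((q * Real.exp x / (1 - q + q * Real.exp x) - 1/2) ^ 2) x := by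
    intro x
    set d := 1 - q + q * Real.exp x with hdd
    have h1 : HasDerivAt (fun x : ℝ => 1 - q + q * Real.exp x) (q * Real.exp x) x := by
      simpa using ((Real.hasDerivAt_exp x).const_mul q).const_add (1 - q)
    have h2 : HasDerivAt (fun x : ℝ => q * Real.exp x) (q * Real.exp x) x :=
      (Real.hasDerivAt_exp x).const_mul q
    have h3 : HasDerivAt (fun x : ℝ => q * Real.exp x / (1 - q + q * Real.exp x))
        ((q * Real.exp x * d - q * Real.exp x * (q * Real.exp x)) / d ^ 2) x :=
      h2.div h1 (hd x).ne'
    have h4 : HasDerivAt (fun x : ℝ => q + x / 4) (1/4) x := by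
      simpa using ((hasDerivAt_id x).div_const 4).const_add q
    have := h4.sub h3
    refine this.congr_deriv ?_
    have hd0 : d ≠ 0 := (hd x).ne'
    field_simp
    ring
  have hmono : Monotone g1 :=
    monotone_of_deriv_nonneg (fun x => (hder1 x).differentiableAt)
      (fun x => by rw [(hder1 x).deriv]; positivity)
  have hg10 : g1 0 = 0 := by
    simp [g1]
  have hg1nonneg : ∀ x, 0 ≤ x → 0 ≤ g1 x := fun x hx => hg10 ▸ hmono hx
  have hgmono : MonotoneOn g (Set.Ici 0) := by
    apply monotoneOn_of_deriv_nonneg (convex_Ici 0)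
      (Continuous.continuousOn (by
        have : Differentiable ℝ g := fun x => (hder x).differentiableAt
        exact this.continuous))
      (fun x _ => (hder x).differentiableAt.differentiableWithinAt)
    intro x hx
    rw [(hder x).deriv]
    exact hg1nonneg x (le_of_lt (by simpa using hx))
  have hg0 : g 0 = 0 := by simp [g]
  have : 0 ≤ g t := by
    have := hgmono (Set.mem_Ici.2 le_rfl) (Set.mem_Ici.2 ht) ht
    simpa [hg0] using this
  have hlog : Real.log (1 - q + q * Real.exp t) ≤ t * q + t ^ 2 / 8 := by
    simp only [g] at this; linarith
  calc 1 - q + q * Real.exp t = Real.exp (Real.log (1 - q + q * Real.exp t)) :=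
        (Real.exp_log (hd t)).symm
    _ ≤ _ := Real.exp_le_exp.2 hlog

lemma hoeff_mgf {q : ℝ} (hq0 : 0 ≤ q) (hq1 : q ≤ 1) {t : ℝ} (ht : 0 ≤ t) :
    (1 - q) * Real.exp (-(t * q)) + q * Real.exp (t * (1 - q)) ≤ Real.exp (t ^ 2 / 8) := by
  have h := hoeff_key hq0 hq1 ht
  have h2 := mul_le_mul_of_nonneg_left h (Real.exp_pos (-(t * q))).le
  calc (1 - q) * Real.exp (-(t * q)) + q * Real.exp (t * (1 - q))
      = Real.exp (-(t * q)) * (1 - q + q * Real.exp t) := by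
        have he : Real.exp (t * (1 - q)) = Real.exp (-(t * q)) * Real.exp t := by
          rw [← Real.exp_add]; ring_nf
        rw [he]; ring
    _ ≤ Real.exp (-(t * q)) * Real.exp (t * q + t ^ 2 / 8) := h2
    _ = Real.exp (t ^ 2 / 8) := by rw [← Real.exp_add]; ring_nf

lemma chernoff_subset
    {S : Type*} [Fintype S] [DecidableEq S] [MeasurableSpace S] [MeasurableSingletonClass S]
    {Ω : Type*} [MeasurableSpace Ω] (μ : Measure Ω) [IsProbabilityMeasure μ]
    (p : S → ℝ) (hp0 : ∀ s, 0 ≤ p s) (hp1 : ∑ s, p s = 1)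
    (n : ℕ) (X : Fin n → Ω → S) (hmeas : ∀ i, Measurable (X i))
    (hindep : iIndepFun X μ)
    (hlaw : ∀ i s, (μ (X i ⁻¹' {s})).toReal = p s)
    (ε : ℝ) (hε : 0 < ε) (B : Finset S) :
    (μ {ω | (n:ℝ) * ε / 2 ≤
        ∑ i, ((if X i ω ∈ B then (1:ℝ) else 0) - ∑ s ∈ B, p s)}).toReal
      ≤ Real.exp (-(n:ℝ) * ε ^ 2 / 2) := by
  set q : ℝ := ∑ s ∈ B, p s with hq
  have hq0 : 0 ≤ q := Finset.sum_nonneg fun s _ => hp0 s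
  have hq1 : q ≤ 1 := by
    rw [← hp1]
    exact Finset.sum_le_sum_of_subset_of_nonneg (Finset.subset_univ B) fun s _ _ => hp0 s
  set f : S → ℝ := fun s => (if s ∈ B then 1 else 0) - q with hf
  have hBmeas : MeasurableSet (↑B : Set S) := B.finite_toSet.measurableSet
  have hfmeas : Measurable f := by
    apply Measurable.sub _ measurable_const
    exact Measurable.ite (by simpa using hBmeas) measurable_const measurable_const
  set Y : Fin n → Ω → ℝ := fun i => f ∘ X i with hY
  have hYindep : iIndepFun Y μ := hindep.comp _ fun _ => hfmeas
  have hYmeas : ∀ i, Measurable (Y i) := fun i => hfmeas.comp (hmeas i)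
  set t : ℝ := 2 * ε with htdef
  have ht : 0 ≤ t := by positivity
  -- law of the indicator
  have hlawB : ∀ i, (μ (X i ⁻¹' ↑B)).toReal = q := by
    intro i
    have hU : X i ⁻¹' ↑B = ⋃ s ∈ B, X i ⁻¹' {s} := by ext ω; simp
    rw [hU, measure_biUnion_finset ?_ fun s _ => (hmeas i) (measurableSet_singleton s)]
    · rw [ENNReal.toReal_sum fun s _ => measure_ne_top μ _]
      exact Finset.sum_congr rfl fun s _ => hlaw i s
    · intro s _ u _ hsu
      exact Disjoint.preimage _ (by simp [Set.disjoint_singleton, hsu])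
  -- representation of exp (t * Y i)
  have hrep : ∀ i, (fun ω => Real.exp (t * Y i ω)) =
      fun ω => Set.indicator (X i ⁻¹' ↑B) (fun _ => Real.exp (t * (1 - q))) ω +
        Set.indicator (X i ⁻¹' ↑B)ᶜ (fun _ => Real.exp (t * (0 - q))) ω := by
    intro i
    funext ω
    by_cases h : X i ω ∈ B <;>
      simp [Y, f, Set.indicator, h]
  have hint : ∀ i, Integrable (fun ω => Real.exp (t * Y i ω)) μ := by
    intro i
    rw [hrep i]
    exact ((integrable_const _).indicator ((hmeas i) hBmeas)).add
      ((integrable_const _).indicator ((hmeas i) hBmeas).compl)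
  -- mgf bound
  have hmgf : ∀ i, mgf (Y i) μ t ≤ Real.exp (t ^ 2 / 8) := by
    intro i
    have hA : MeasurableSet (X i ⁻¹' ↑B) := (hmeas i) hBmeas
    have hcompl : (μ (X i ⁻¹' ↑B)ᶜ).toReal = 1 - q := by
      rw [measure_compl hA (measure_ne_top μ _), measure_univ,
        ENNReal.toReal_sub_of_le (prob_le_one) ENNReal.one_ne_top,
        ENNReal.toReal_one, hlawB i]
    have : mgf (Y i) μ t =
        q * Real.exp (t * (1 - q)) + (1 - q) * Real.exp (t * (0 - q)) := by
      rw [mgf, hrep i, integral_add ((integrable_const _).indicator hA)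
        ((integrable_const _).indicator hA.compl),
        integral_indicator_const _ hA, integral_indicator_const _ hA.compl,
        measureReal_def, measureReal_def, hlawB i, hcompl]
      simp [mul_comm]
    rw [this]
    have h2 : Real.exp (t * (0 - q)) = Real.exp (-(t * q)) := by ring_nf
    rw [h2]
    have := hoeff_mgf hq0 hq1 ht
    linarith
  -- Chernoff
  have hev : {ω | (n:ℝ) * ε / 2 ≤
        ∑ i, ((if X i ω ∈ B then (1:ℝ) else 0) - ∑ s ∈ B, p s)} =
      {ω | (n:ℝ) * ε / 2 ≤ (∑ i, Y i) ω} := by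
    ext ω; simp [Y, f, Finset.sum_apply, hq]
  rw [hev]
  have hintsum : Integrable (fun ω => Real.exp (t * (∑ i, Y i) ω)) μ :=
    hYindep.integrable_exp_mul_sum hYmeas fun i _ => hint i
  calc (μ {ω | (n:ℝ) * ε / 2 ≤ (∑ i, Y i) ω}).toReal
      ≤ Real.exp (-t * ((n:ℝ) * ε / 2)) * mgf (∑ i, Y i) μ t :=
        measure_ge_le_exp_mul_mgf _ ht hintsum
    _ = Real.exp (-t * ((n:ℝ) * ε / 2)) * ∏ i, mgf (Y i) μ t := by
        rw [hYindep.mgf_sum hYmeas]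
    _ ≤ Real.exp (-t * ((n:ℝ) * ε / 2)) * ∏ _i : Fin n, Real.exp (t ^ 2 / 8) := by
        apply mul_le_mul_of_nonneg_left _ (Real.exp_pos _).le
        exact Finset.prod_le_prod (fun i _ => mgf_nonneg) fun i _ => hmgf i
    _ = Real.exp (-(n:ℝ) * ε ^ 2 / 2) := by
        rw [Finset.prod_const, ← Real.exp_nat_mul, ← Real.exp_add]
        congr 1
        simp [htdef, Finset.card_univ]
        ring

theorem l1_concentration
    {S : Type*} [Fintype S] [DecidableEq S] [MeasurableSpace S] [MeasurableSingletonClass S]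
    {Ω : Type*} [MeasurableSpace Ω] (μ : Measure Ω) [IsProbabilityMeasure μ]
    (p : S → ℝ) (hp0 : ∀ s, 0 ≤ p s) (hp1 : ∑ s, p s = 1)
    (n : ℕ) (hn : 1 ≤ n) (X : Fin n → Ω → S)
    (hmeas : ∀ i, Measurable (X i))
    (hindep : iIndepFun X μ)
    (hlaw : ∀ i s, (μ (X i ⁻¹' {s})).toReal = p s)
    (ε : ℝ) (hε : 0 < ε) :
    (μ {ω | ε ≤ ∑ s, |(n : ℝ)⁻¹ *
        (Finset.univ.filter (fun i => X i ω = s)).card - p s|}).toReal ≤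
      ((2 : ℝ) ^ Fintype.card S - 2) * Real.exp (-(n : ℝ) * ε ^ 2 / 2) := by
  haveI hS : Nonempty S := by
    rcases isEmpty_or_nonempty S with h | h
    · exact absurd hp1 (by simp)
    · exact h
  have hn0 : (n : ℝ) ≠ 0 := by positivity
  -- counting fibers
  have hcount : ∀ (ω : Ω) (B : Finset S),
      (Finset.univ.filter (fun i => X i ω ∈ B)).card =
        ∑ s ∈ B, (Finset.univ.filter (fun i => X i ω = s)).card := by
    intro ω B
    rw [Finset.card_eq_sum_card_fiberwise (f := fun i => X i ω) (s := Finset.univ.filter (fun i => X i ω ∈ B)) (t := B)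
      (fun ⦃i⦄ hi => (Finset.mem_filter.1 (Finset.mem_coe.1 hi)).2)]
    refine Finset.sum_congr rfl fun s hs => ?_
    rw [Finset.filter_filter]
    exact congrArg Finset.card (Finset.filter_congr fun i _ =>
      ⟨fun h => h.2, fun h => ⟨by show X i ω ∈ B; rw [h]; exact hs, h⟩⟩)
  set PP : Finset (Finset S) := Finset.univ \ {∅, Finset.univ} with hPP
  set E : Finset S → Set Ω := fun B => {ω | (n:ℝ) * ε / 2 ≤
      ∑ i, ((if X i ω ∈ B then (1:ℝ) else 0) - ∑ s ∈ B, p s)} with hE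
  -- inclusion into the union
  have hsub : {ω | ε ≤ ∑ s, |(n : ℝ)⁻¹ *
        (Finset.univ.filter (fun i => X i ω = s)).card - p s|} ⊆ ⋃ B ∈ PP, E B := by
    intro ω hω
    simp only [Set.mem_setOf_eq] at hω
    set v : S → ℝ := fun s =>
      (n : ℝ)⁻¹ * (Finset.univ.filter (fun i => X i ω = s)).card - p s with hv
    have htotal : ∑ s, ((Finset.univ.filter (fun i => X i ω = s)).card : ℝ) = n := by
      have := hcount ω Finset.univ
      have h2 : (Finset.univ.filter (fun i => X i ω ∈ Finset.univ)).card = n := by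
        simp
      rw [h2] at this
      exact_mod_cast this.symm
    have hvsum : ∑ s, v s = 0 := by
      simp only [hv, Finset.sum_sub_distrib, hp1, ← Finset.mul_sum, htotal]
      field_simp; norm_num
    set B : Finset S := Finset.univ.filter (fun s => 0 < v s) with hB
    have hsplit : ∑ s ∈ B, v s + ∑ s ∈ Finset.univ.filter (fun s => ¬ 0 < v s), v s = 0 := by
      rw [Finset.sum_filter_add_sum_filter_not]; exact hvsum
    have habs : ∑ s, |v s| =
        ∑ s ∈ B, v s - ∑ s ∈ Finset.univ.filter (fun s => ¬ 0 < v s), v s := by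
      rw [← Finset.sum_filter_add_sum_filter_not Finset.univ (fun s => 0 < v s)
        (fun s => |v s|)]
      congr 1
      · exact Finset.sum_congr rfl fun s hs =>
          abs_of_pos (Finset.mem_filter.1 hs).2
      · rw [← Finset.sum_neg_distrib]
        exact Finset.sum_congr rfl fun s hs =>
          abs_of_nonpos (le_of_not_gt (Finset.mem_filter.1 hs).2)
    have hB2 : ε / 2 ≤ ∑ s ∈ B, v s := by
      have : ∑ s ∈ B, v s = (∑ s, |v s|) / 2 := by linarith
      linarith
    have hBpos : 0 < ∑ s ∈ B, v s := lt_of_lt_of_le (by linarith) hB2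
    have hBne : B ≠ ∅ := by
      intro h; rw [h] at hBpos; simp at hBpos
    have hBuniv : B ≠ Finset.univ := by
      intro h; rw [h, hvsum] at hBpos; exact lt_irrefl _ hBpos
    have hmemPP : B ∈ PP := by simp [hPP, hBne, hBuniv]
    have hmemE : ω ∈ E B := by
      show (n:ℝ) * ε / 2 ≤ ∑ i, ((if X i ω ∈ B then (1:ℝ) else 0) - ∑ s ∈ B, p s)
      have hsum : ∑ i, ((if X i ω ∈ B then (1:ℝ) else 0) - ∑ s ∈ B, p s) =
          (n : ℝ) * ∑ s ∈ B, v s := by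
        rw [Finset.sum_sub_distrib, Finset.sum_boole]
        have hc : ((Finset.univ.filter (fun i => X i ω ∈ B)).card : ℝ) =
            ∑ s ∈ B, ((Finset.univ.filter (fun i => X i ω = s)).card : ℝ) := by
          exact_mod_cast congrArg Nat.cast (hcount ω B)
        simp only [hv, Finset.mul_sum, mul_sub, Finset.sum_sub_distrib]
        rw [Finset.sum_const, Finset.card_univ, Fintype.card_fin, hc]
        congr 1
        · exact Finset.sum_congr rfl fun s _ => by
            rw [← mul_assoc, mul_inv_cancel₀ hn0, one_mul]
        · simp [Finset.mul_sum, nsmul_eq_mul]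
      rw [hsum]
      calc (n:ℝ) * ε / 2 = (n:ℝ) * (ε / 2) := by ring
        _ ≤ (n : ℝ) * ∑ s ∈ B, v s :=
            mul_le_mul_of_nonneg_left hB2 (by positivity)
    exact Set.mem_biUnion hmemPP hmemE
  -- union bound
  have hfin : ∑ B ∈ PP, μ (E B) ≠ ⊤ :=
    (ENNReal.sum_lt_top.2 fun _ _ => measure_lt_top μ _).ne
  have hcard : (PP.card : ℝ) = (2 : ℝ) ^ Fintype.card S - 2 := by
    have hne : (∅ : Finset S) ≠ Finset.univ := by
      simpa using (Finset.univ_nonempty (α := S)).ne_empty.symm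
    have h1 : PP.card = 2 ^ Fintype.card S - 2 := by
      rw [hPP, Finset.card_sdiff_of_subset (Finset.subset_univ _), Finset.card_univ,
        Fintype.card_finset, Finset.card_pair hne]
    have h2 : 2 ≤ 2 ^ Fintype.card S := by
      calc 2 = 2 ^ 1 := (pow_one 2).symm
        _ ≤ 2 ^ Fintype.card S := Nat.pow_le_pow_right (by norm_num) Fintype.card_pos
    rw [h1, Nat.cast_sub h2]
    push_cast
    ring
  calc (μ {ω | ε ≤ ∑ s, |(n : ℝ)⁻¹ *
        (Finset.univ.filter (fun i => X i ω = s)).card - p s|}).toReal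
      ≤ (∑ B ∈ PP, μ (E B)).toReal := ENNReal.toReal_mono hfin
        ((measure_mono hsub).trans (measure_biUnion_finset_le PP E))
    _ = ∑ B ∈ PP, (μ (E B)).toReal := ENNReal.toReal_sum fun _ _ => measure_ne_top μ _
    _ ≤ ∑ _B ∈ PP, Real.exp (-(n : ℝ) * ε ^ 2 / 2) :=
        Finset.sum_le_sum fun B _ =>
          chernoff_subset μ p hp0 hp1 n X hmeas hindep hlaw ε hε B
    _ = ((2 : ℝ) ^ Fintype.card S - 2) * Real.exp (-(n : ℝ) * ε ^ 2 / 2) := by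
        rw [Finset.sum_const, nsmul_eq_mul, hcard]
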